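/- Let Z ∈ {0,1} be a random variable with p = P(Z = 1) ∈ (0,1), and let T*(0), T*(1) ∈ {0,1} be random variables independent of Z with P(T*(1) ≥ T*(0)) = 1. Define the observed treatment T = T*(Z). Then P(T*(1) > T*(0)) = E[T·Z]/p − E[T·(1−Z)]/(1−p). -/

import Mathlib

open MeasureTheory

lemma aux_integral {Ω : Type*} [MeasurableSpace Ω] (P : Measure Ω) [IsProbabilityMeasure P]
    (f : Ω → Bool) (s : Set Ω) (hs : MeasurableSet s) (hset : s = {ω | f ω = true}) :
    (∫ ω, (if f ω then (1:ℝ) else 0) ∂P) = (P s).toReal := by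
  have : (fun ω => (if f ω then (1:ℝ) else 0)) = s.indicator (fun _ => (1:ℝ)) := by
    funext ω
    simp [Set.indicator_apply, hset]
  rw [this, integral_indicator_const _ hs]
  simp
  rfl

/-- Identification of the complier probability in the Imbens–Angrist model: with a binary
instrument `Z` independent of the potential treatments `(T*(0), T*(1))`, no defiers, and
`T = T*(Z)`, we have `P(T*(1) > T*(0)) = E[TZ]/p − E[T(1−Z)]/(1−p)`. -/
theorem stmt12 {Ω : Type*} [MeasurableSpace Ω] (P : Measure Ω) [IsProbabilityMeasure P]
    (Z T0 T1 : Ω → Bool) (hZ : Measurable Z) (hT0 : Measurable T0) (hT1 : Measurable T1)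
    (hindep : ProbabilityTheory.IndepFun (fun ω => (T0 ω, T1 ω)) Z P)
    (hmono : ∀ᵐ ω ∂P, T0 ω ≤ T1 ω)
    (p : ℝ) (hp : p = (P {ω | Z ω = true}).toReal) (hp0 : 0 < p) (hp1 : p < 1) :
    (P {ω | T0 ω = false ∧ T1 ω = true}).toReal
      = (∫ ω, (if (if Z ω then T1 ω else T0 ω) then (1:ℝ) else 0)
            * (if Z ω then (1:ℝ) else 0) ∂P) / p
        - (∫ ω, (if (if Z ω then T1 ω else T0 ω) then (1:ℝ) else 0)
            * (if Z ω then (0:ℝ) else 1) ∂P) / (1 - p) := by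
  -- independence of T1 and Z, T0 and Z
  have hT1Z : ProbabilityTheory.IndepFun T1 Z P := by
    have := hindep.comp (measurable_snd : Measurable (Prod.snd : Bool × Bool → Bool))
      measurable_id
    exact this
  have hT0Z : ProbabilityTheory.IndepFun T0 Z P := by
    have := hindep.comp (measurable_fst : Measurable (Prod.fst : Bool × Bool → Bool))
      measurable_id
    exact this
  -- rewrite the two integrands
  have e1 : (fun ω => (if (if Z ω then T1 ω else T0 ω) then (1:ℝ) else 0)
      * (if Z ω then (1:ℝ) else 0))
      = fun ω => (if (Z ω && T1 ω) then (1:ℝ) else 0) := by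
    funext ω
    by_cases hz : Z ω <;> by_cases h1 : T1 ω <;> simp [hz, h1]
  have e2 : (fun ω => (if (if Z ω then T1 ω else T0 ω) then (1:ℝ) else 0)
      * (if Z ω then (0:ℝ) else 1))
      = fun ω => (if (!Z ω && T0 ω) then (1:ℝ) else 0) := by
    funext ω
    by_cases hz : Z ω <;> by_cases h0 : T0 ω <;> simp [hz, h0]
  -- measure computations via independence
  have mAZ : MeasurableSet {ω | Z ω = true ∧ T1 ω = true} := by
    exact (hZ (measurableSet_singleton true)).inter (hT1 (measurableSet_singleton true))
  have mBZ : MeasurableSet {ω | Z ω = false ∧ T0 ω = true} := by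
    exact (hZ (measurableSet_singleton false)).inter (hT0 (measurableSet_singleton true))
  have I1 : (∫ ω, (if (Z ω && T1 ω) then (1:ℝ) else 0) ∂P)
      = (P {ω | Z ω = true ∧ T1 ω = true}).toReal := by
    apply aux_integral P _ _ mAZ
    ext ω; simp [Bool.and_eq_true]
  have I2 : (∫ ω, (if (!Z ω && T0 ω) then (1:ℝ) else 0) ∂P)
      = (P {ω | Z ω = false ∧ T0 ω = true}).toReal := by
    apply aux_integral P _ _ mBZ
    ext ω; simp [Bool.and_eq_true]
  have hind1 := (ProbabilityTheory.indepFun_iff_measure_inter_preimage_eq_mul.mp hT1Z)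
      {true} {true} (measurableSet_singleton true) (measurableSet_singleton true)
  have hind0 := (ProbabilityTheory.indepFun_iff_measure_inter_preimage_eq_mul.mp hT0Z)
      {true} {false} (measurableSet_singleton true) (measurableSet_singleton false)
  have hq1 : P {ω | Z ω = true ∧ T1 ω = true}
      = P {ω | T1 ω = true} * P {ω | Z ω = true} := by
    have : {ω | Z ω = true ∧ T1 ω = true} = T1 ⁻¹' {true} ∩ Z ⁻¹' {true} := by
      ext ω; simp [and_comm]
    rw [this, hind1]; rfl
  have hq0 : P {ω | Z ω = false ∧ T0 ω = true}
      = P {ω | T0 ω = true} * P {ω | Z ω = false} := by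
    have : {ω | Z ω = false ∧ T0 ω = true} = T0 ⁻¹' {true} ∩ Z ⁻¹' {false} := by
      ext ω; simp [and_comm]
    rw [this, hind0]; rfl
  -- P(Z = false) = 1 - p
  have hZc : {ω | Z ω = false} = {ω | Z ω = true}ᶜ := by
    ext ω; simp
  have hZtlt : P {ω | Z ω = true} ≠ ⊤ := measure_ne_top _ _
  have hmZt : MeasurableSet {ω | Z ω = true} := hZ (measurableSet_singleton true)
  have hadd : P {ω | Z ω = true} + P {ω | Z ω = false} = 1 := by
    rw [hZc]
    simpa using measure_add_measure_compl (μ := P) hmZt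
  have hPZf : (P {ω | Z ω = false}).toReal = 1 - p := by
    have h := congrArg ENNReal.toReal hadd
    rw [ENNReal.toReal_add (measure_ne_top _ _) (measure_ne_top _ _)] at h
    rw [ENNReal.toReal_one] at h
    linarith [h, hp.symm]
  -- key: P{T1=true} = P{T0=true} + P{T0=false ∧ T1=true}
  have hsub : P {ω | T0 ω = true} = P {ω | T0 ω = true ∧ T1 ω = true} := by
    apply measure_congr
    rw [Filter.eventuallyEq_set]
    filter_upwards [hmono] with ω h
    constructor
    · intro h0; exact ⟨h0, by rw [h0] at h; exact Bool.eq_true_of_true_le h⟩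
    · exact fun h => h.1
  have hsplit : P {ω | T1 ω = true}
      = P {ω | T0 ω = true ∧ T1 ω = true} + P {ω | T0 ω = false ∧ T1 ω = true} := by
    have hu : {ω | T1 ω = true}
        = {ω | T0 ω = true ∧ T1 ω = true} ∪ {ω | T0 ω = false ∧ T1 ω = true} := by
      ext ω
      simp only [Set.mem_setOf_eq, Set.mem_union]
      by_cases h0 : T0 ω <;> simp [h0]
    have m2 : MeasurableSet {ω | T0 ω = false ∧ T1 ω = true} :=
      (hT0 (measurableSet_singleton false)).inter (hT1 (measurableSet_singleton true))
    have hdisj : Disjoint {ω | T0 ω = true ∧ T1 ω = true}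
        {ω | T0 ω = false ∧ T1 ω = true} := by
      apply Set.disjoint_left.mpr
      rintro ω ⟨h0, _⟩ ⟨h0', _⟩
      simp [h0] at h0'
    rw [hu, measure_union hdisj m2]
  have key : P {ω | T1 ω = true}
      = P {ω | T0 ω = true} + P {ω | T0 ω = false ∧ T1 ω = true} := by
    rw [hsplit, hsub]
  -- put it together
  rw [e1, e2, I1, I2, hq1, hq0]
  rw [ENNReal.toReal_mul, ENNReal.toReal_mul, ← hp, hPZf]
  rw [mul_div_assoc, mul_div_assoc, div_self (ne_of_gt hp0),
    div_self (by linarith : (1:ℝ) - p ≠ 0), mul_one, mul_one]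
  have h1t : (P {ω | T1 ω = true}).toReal
      = (P {ω | T0 ω = true}).toReal + (P {ω | T0 ω = false ∧ T1 ω = true}).toReal := by
    rw [key, ENNReal.toReal_add (measure_ne_top _ _) (measure_ne_top _ _)]
  linarith
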